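/- Let χ be a finite set, ν the uniform distribution on χ, and μ a fully supported distribution on χ, with ρ(x) = ν(x)/μ(x). Let L = D_KL(ν||μ). For i.i.d. samples X_1, …, X_N from μ and the estimator I_N = (1/N) Σ 1/μ(X_i) of |χ|: if t ≥ 0, N = ⌈exp(L + t)⌉, and ε² = (L+2)/(L+t), then E[|I_N − |χ|| / |χ|] ≤ e^{−t/4} + 2ε. -/

import Mathlib

open Finset

lemma log_le_half (u : ℝ) (hu : 0 < u) : Real.log u ≤ u / 2 := by
  have h1 : Real.log u = 2 * Real.log (Real.sqrt u) := by
    rw [Real.log_sqrt hu.le]; ring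
  have h2 : Real.log (Real.sqrt u) ≤ Real.sqrt u - 1 :=
    Real.log_le_sub_one_of_pos (Real.sqrt_pos.mpr hu)
  nlinarith [sq_nonneg (Real.sqrt u - 2), Real.sq_sqrt hu.le, Real.sqrt_nonneg u]

lemma sum_pi_prod {N : ℕ} {χ : Type*} [Fintype χ] (f : Fin N → χ → ℝ) :
    ∑ X : Fin N → χ, ∏ i, f i (X i) = ∏ i, ∑ x, f i x := by
  have := Finset.prod_univ_sum (fun _ : Fin N => (univ : Finset χ)) f
  rw [Fintype.piFinset_univ] at this
  exact this.symm

lemma exp_single {N : ℕ} {χ : Type*} [Fintype χ]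
    (μ F : χ → ℝ) (hsum : ∑ x, μ x = 1) (j : Fin N) :
    ∑ X : Fin N → χ, (∏ i, μ (X i)) * F (X j) = ∑ x, μ x * F x := by
  classical
  have key : ∀ X : Fin N → χ, (∏ i, μ (X i)) * F (X j)
      = ∏ i, (μ (X i) * if i = j then F (X i) else 1) := by
    intro X
    rw [Finset.prod_mul_distrib, Finset.prod_ite_eq' univ j (fun i => F (X i))]
    simp
  simp_rw [key]
  rw [sum_pi_prod (fun i x => μ x * if i = j then F x else 1)]
  have : ∀ i : Fin N, (∑ x, μ x * if i = j then F x else 1)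
      = if i = j then (∑ x, μ x * F x) else 1 := by
    intro i
    by_cases h : i = j <;> simp [h, hsum]
  simp_rw [this]
  rw [Finset.prod_ite_eq' univ j (fun _ => ∑ x, μ x * F x)]
  simp

lemma exp_pair {N : ℕ} {χ : Type*} [Fintype χ]
    (μ F G : χ → ℝ) (hsum : ∑ x, μ x = 1) (j k : Fin N) (hjk : j ≠ k) :
    ∑ X : Fin N → χ, (∏ i, μ (X i)) * (F (X j) * G (X k))
      = (∑ x, μ x * F x) * (∑ x, μ x * G x) := by
  classical
  have key : ∀ X : Fin N → χ, (∏ i, μ (X i)) * (F (X j) * G (X k))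
      = ∏ i, (μ (X i) * (if i = j then F (X i) else 1) * (if i = k then G (X i) else 1)) := by
    intro X
    rw [Finset.prod_mul_distrib, Finset.prod_mul_distrib,
      Finset.prod_ite_eq' univ j (fun i => F (X i)),
      Finset.prod_ite_eq' univ k (fun i => G (X i))]
    simp [mul_assoc]
  simp_rw [key]
  rw [sum_pi_prod (fun i x => μ x * (if i = j then F x else 1) * (if i = k then G x else 1))]
  have : ∀ i : Fin N, (∑ x, μ x * (if i = j then F x else 1) * (if i = k then G x else 1))
      = (if i = j then (∑ x, μ x * F x) else 1) * (if i = k then (∑ x, μ x * G x) else 1) := by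
    intro i
    by_cases h1 : i = j
    · have h2 : ¬ i = k := by rw [h1]; exact hjk
      simp [h1, h2, hjk]
    · by_cases h2 : i = k
      · simp [h1, h2, hjk.symm]
      · simp [h1, h2, hsum]
  simp_rw [this]
  rw [Finset.prod_mul_distrib, Finset.prod_ite_eq' univ j (fun _ => ∑ x, μ x * F x),
    Finset.prod_ite_eq' univ k (fun _ => ∑ x, μ x * G x)]
  simp

set_option maxHeartbeats 1000000 in
/-- Chatterjee–Diaconis bound for importance sampling of `|χ|` with uniform target `ν`
and sampling distribution `μ` on a finite set `χ`: with `ρ(x) = ν(x)/μ(x)`,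
`L = D_KL(ν‖μ)`, `t ≥ 0`, `N = ⌈exp(L+t)⌉` and `ε² = (L+2)/(L+t)`, the estimator
`I_N = (1/N) Σ 1/μ(X_i)` from `N` i.i.d. samples satisfies
`E[|I_N − |χ||/|χ|] ≤ e^{−t/4} + 2ε`. -/
theorem importance_sampling_count_error_bound
    {χ : Type*} [Fintype χ] [Nonempty χ]
    (μ : χ → ℝ) (hpos : ∀ x, 0 < μ x) (hsum : ∑ x, μ x = 1)
    (L t ε : ℝ)
    (hL : L = ∑ x, (1 / Fintype.card χ : ℝ) *
        Real.log ((1 / Fintype.card χ : ℝ) / μ x))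
    (ht : 0 ≤ t) (hε0 : 0 ≤ ε) (hε : ε ^ 2 = (L + 2) / (L + t))
    (N : ℕ) (hN : N = ⌈Real.exp (L + t)⌉₊) :
    ∑ X : Fin N → χ, (∏ i, μ (X i)) *
        (|(1 / N : ℝ) * (∑ i, 1 / μ (X i)) - Fintype.card χ| / Fintype.card χ)
      ≤ Real.exp (-t / 4) + 2 * ε := by
  classical
  have hcard0 : (0:ℝ) < (Fintype.card χ : ℝ) := by exact_mod_cast Fintype.card_pos
  set k : ℝ := (Fintype.card χ : ℝ) with hk_def
  have hk : 0 < k := hcard0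
  have hkne : k ≠ 0 := hk.ne'
  set ρ : χ → ℝ := fun x => 1 / (k * μ x) with hρ_def
  have hρpos : ∀ x, 0 < ρ x := fun x => div_pos one_pos (mul_pos hk (hpos x))
  have hμρ : ∀ x, μ x * ρ x = 1 / k := by
    intro x
    rw [hρ_def]; dsimp only
    rw [mul_one_div, div_eq_div_iff (mul_pos hk (hpos x)).ne' hkne]
    ring
  have hone_div_k_sum : ∑ _x : χ, (1/k : ℝ) = 1 := by
    rw [Finset.sum_const, Finset.card_univ, nsmul_eq_mul]
    field_simp
    exact hk_def.symm
  have hsumμρ : ∑ x, μ x * ρ x = 1 := by simp_rw [hμρ]; exact hone_div_k_sum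
  have hL' : L = ∑ x, (1/k) * Real.log (ρ x) := by
    rw [hL]
    refine Finset.sum_congr rfl fun x _ => ?_
    rw [hρ_def]
    rw [div_div]
  -- Gibbs: L ≥ 0
  have hlogρ_eq : ∀ x, Real.log (ρ x) = - Real.log (k * μ x) := by
    intro x
    rw [hρ_def]; dsimp only
    rw [one_div, Real.log_inv]
  have hlogρ_lb : ∀ x, 1 - k * μ x ≤ Real.log (ρ x) := by
    intro x
    have h1 : Real.log (k * μ x) ≤ k * μ x - 1 :=
      Real.log_le_sub_one_of_pos (mul_pos hk (hpos x))
    rw [hlogρ_eq x]; linarith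
  have hzero_sum : ∑ x, (1/k) * (1 - k * μ x) = 0 := by
    have h : ∀ x, (1/k) * (1 - k * μ x) = 1/k - μ x := by
      intro x; field_simp
    simp_rw [h]
    rw [Finset.sum_sub_distrib, hone_div_k_sum, hsum, sub_self]
  have hL0 : 0 ≤ L := by
    have h1 : ∑ x, (1/k) * (1 - k * μ x) ≤ ∑ x, (1/k) * Real.log (ρ x) := by
      refine Finset.sum_le_sum fun x _ => ?_
      have h1k : (0:ℝ) ≤ 1/k := by positivity
      exact mul_le_mul_of_nonneg_left (hlogρ_lb x) h1k
    rw [hL']; rw [hzero_sum] at h1; linarith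
  -- N facts
  have hNposℕ : 0 < N := by rw [hN]; exact Nat.ceil_pos.mpr (Real.exp_pos _)
  have hNr : Real.exp (L + t) ≤ (N : ℝ) := by rw [hN]; exact Nat.le_ceil _
  have hNpos : (0:ℝ) < (N:ℝ) := by exact_mod_cast hNposℕ
  -- truncation
  set A : ℝ := Real.exp (L + t/2) with hA_def
  have hApos : 0 < A := Real.exp_pos _
  set g : χ → ℝ := fun x => if ρ x ≤ A then ρ x else 0 with hg_def
  have hg0 : ∀ x, 0 ≤ g x := by
    intro x; rw [hg_def]; dsimp only
    split
    · exact (hρpos x).le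
    · exact le_rfl
  have hgρ : ∀ x, g x ≤ ρ x := by
    intro x; rw [hg_def]; dsimp only
    split
    · exact le_rfl
    · exact (hρpos x).le
  have hgA : ∀ x, g x ≤ A := by
    intro x; rw [hg_def]; dsimp only
    split
    · assumption
    · exact hApos.le
  set m : ℝ := ∑ x, μ x * g x with hm_def
  set p : ℝ := ∑ x, (if A < ρ x then (1/k : ℝ) else 0) with hp_def
  have hμh : ∀ x, μ x * (ρ x - g x) = (if A < ρ x then (1/k:ℝ) else 0) := by
    intro x
    rw [hg_def]; dsimp only
    by_cases h : ρ x ≤ A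
    · rw [if_pos h, if_neg (not_lt.mpr h)]; ring
    · rw [if_neg h, if_pos (not_le.mp h), sub_zero, hμρ]
  have h1m : 1 - m = p := by
    rw [hp_def, hm_def]
    simp_rw [← hμh, mul_sub]
    rw [Finset.sum_sub_distrib, hsumμρ]
  have hp0 : 0 ≤ p := by
    rw [hp_def]
    refine Finset.sum_nonneg fun x _ => ?_
    split
    · positivity
    · exact le_rfl
  have hm1 : m ≤ 1 := by linarith [h1m ▸ hp0]
  have hm0 : 0 ≤ m := by
    rw [hm_def]
    exact Finset.sum_nonneg fun x _ => mul_nonneg (hpos x).le (hg0 x)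
  -- positive part bound
  have hpos_part : ∑ x, (1/k) * max (Real.log (ρ x)) 0 ≤ L + 1/2 := by
    have hterm : ∀ x, max (Real.log (ρ x)) 0 ≤ Real.log (ρ x) + (k * μ x)/2 := by
      intro x
      have h2 : Real.log (k * μ x) ≤ (k * μ x)/2 := log_le_half _ (mul_pos hk (hpos x))
      have h3 := hlogρ_eq x
      rcases le_total (Real.log (ρ x)) 0 with h|h
      · rw [max_eq_right h]; linarith
      · rw [max_eq_left h]
        have := mul_pos hk (hpos x)
        linarith
    calc ∑ x, (1/k) * max (Real.log (ρ x)) 0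
        ≤ ∑ x, (1/k) * (Real.log (ρ x) + (k * μ x)/2) := by
          refine Finset.sum_le_sum fun x _ => ?_
          exact mul_le_mul_of_nonneg_left (hterm x) (by positivity)
      _ = L + 1/2 := by
          simp_rw [mul_add]
          rw [Finset.sum_add_distrib, ← hL']
          have h : ∀ x, (1/k) * ((k * μ x)/2) = μ x / 2 := by
            intro x; field_simp
          simp_rw [h]
          rw [← Finset.sum_div, hsum]
  -- p ≤ ε
  have hpε : p ≤ ε := by
    by_cases hε1 : 1 ≤ ε
    · have hp1 : p ≤ 1 := by
        rw [hp_def]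
        calc ∑ x, (if A < ρ x then (1/k:ℝ) else 0) ≤ ∑ _x : χ, (1/k:ℝ) := by
              refine Finset.sum_le_sum fun x _ => ?_
              split
              · exact le_rfl
              · positivity
          _ = 1 := hone_div_k_sum
      linarith
    · push_neg at hε1
      have hLt : 0 ≤ L + t := by linarith
      rcases eq_or_lt_of_le hLt with hLt0 | hLtpos
      · -- L = 0, t = 0, equality case of Gibbs
        have hL00 : L = 0 := by linarith
        have ht0 : t = 0 := by linarith
        have hsum0 : ∑ x, ((1/k) * Real.log (ρ x) - (1/k) * (1 - k * μ x)) = 0 := by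
          rw [Finset.sum_sub_distrib, ← hL', hzero_sum, hL00, sub_zero]
        have heach := (Finset.sum_eq_zero_iff_of_nonneg (fun x _ => by
          have := hlogρ_lb x
          have h1k : (0:ℝ) ≤ 1/k := by positivity
          nlinarith)).mp hsum0
        have hρ1 : ∀ x, ρ x ≤ 1 := by
          intro x
          have hx := heach x (Finset.mem_univ x)
          have h1k : (0:ℝ) < 1/k := by positivity
          have hlg : Real.log (ρ x) = 1 - k * μ x := by
            have : (1/k) * (Real.log (ρ x) - (1 - k * μ x)) = 0 := by linarith [hx]
            have h2 := mul_eq_zero.mp this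
            rcases h2 with h2 | h2
            · exact absurd h2 h1k.ne'
            · linarith
          have hkμ : k * μ x = 1 := by
            by_contra hne
            have hlt := Real.log_lt_sub_one_of_pos (mul_pos hk (hpos x)) hne
            rw [hlogρ_eq x] at hlg
            linarith
          rw [hρ_def]; dsimp only; rw [hkμ]; norm_num
        have hpz : p = 0 := by
          rw [hp_def]
          refine Finset.sum_eq_zero fun x _ => ?_
          have hA1 : A = 1 := by rw [hA_def, hL00, ht0]; norm_num
          rw [if_neg]
          rw [hA1]
          exact not_lt.mpr (hρ1 x)
        rw [hpz]; exact hε0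
      · have hε2lt1 : ε^2 < 1 := by nlinarith
        have ht2 : 2 < t := by
          rw [hε] at hε2lt1
          have := (div_lt_one hLtpos).mp hε2lt1
          linarith
        have hden : 0 < L + t/2 := by linarith
        have hmarkov : p * (L + t/2) ≤ L + 1/2 := by
          have hps : p * (L + t/2) = ∑ x, (if A < ρ x then (1/k:ℝ) else 0) * (L + t/2) := by
            rw [hp_def, Finset.sum_mul]
          rw [hps]
          refine le_trans (Finset.sum_le_sum fun x _ => ?_) hpos_part
          by_cases h : A < ρ x
          · rw [if_pos h]
            have hlog : L + t/2 ≤ Real.log (ρ x) := by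
              have h2 : Real.log A ≤ Real.log (ρ x) := Real.log_le_log hApos h.le
              rwa [hA_def, Real.log_exp] at h2
            have h3 : L + t/2 ≤ max (Real.log (ρ x)) 0 := le_trans hlog (le_max_left _ _)
            calc (1/k) * (L + t/2) ≤ (1/k) * max (Real.log (ρ x)) 0 :=
                  mul_le_mul_of_nonneg_left h3 (by positivity)
              _ = (1/k) * max (Real.log (ρ x)) 0 := rfl
          · rw [if_neg h, zero_mul]
            have : 0 ≤ max (Real.log (ρ x)) 0 := le_max_right _ _
            positivity
        have hple : p ≤ (L + 1/2)/(L + t/2) := (le_div_iff₀ hden).mpr hmarkov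
        have hq0 : 0 ≤ (L + 1/2)/(L + t/2) := by positivity
        have hsq : ((L + 1/2)/(L + t/2))^2 ≤ ε^2 := by
          rw [hε, div_pow, div_le_div_iff₀ (pow_pos hden 2) hLtpos]
          have h2t : (0:ℝ) ≤ t - 2 := by linarith
          nlinarith [mul_nonneg hL0 h2t, mul_nonneg h2t h2t, mul_nonneg hL0 hL0,
            mul_nonneg (mul_nonneg hL0 ht) ht, mul_nonneg ht h2t, mul_nonneg hL0 ht]
        nlinarith [hple, hq0, hε0, hsq]
  -- rewrite goal in terms of ρ
  have hrw : ∀ X : Fin N → χ,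
      (∏ i, μ (X i)) * (|(1 / N : ℝ) * (∑ i, 1/μ (X i)) - k| / k)
        = (∏ i, μ (X i)) * |(1 / N : ℝ) * (∑ i, ρ (X i)) - 1| := by
    intro X
    congr 1
    have h1 : ∀ i : Fin N, 1 / μ (X i) = k * ρ (X i) := by
      intro i
      rw [hρ_def]; dsimp only
      rw [mul_one_div, div_eq_div_iff (hpos (X i)).ne' (mul_pos hk (hpos (X i))).ne']
      ring
    simp_rw [h1]
    rw [← Finset.mul_sum]
    have h2 : (1/(N:ℝ)) * (k * ∑ i, ρ (X i)) - k = k * ((1/(N:ℝ)) * ∑ i, ρ (X i) - 1) := by ring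
    rw [h2, abs_mul, abs_of_pos hk, mul_comm, mul_div_assoc, div_self hkne, mul_one]
  simp_rw [hrw]
  -- notation
  set P : (Fin N → χ) → ℝ := fun X => ∏ i, μ (X i) with hP_def
  have hP0 : ∀ X, 0 ≤ P X := fun X => Finset.prod_nonneg fun i _ => (hpos (X i)).le
  have hE1 : ∑ X : Fin N → χ, P X = 1 := by
    rw [hP_def]
    rw [sum_pi_prod (fun _ x => μ x)]
    simp [hsum]
  set d : χ → ℝ := fun x => g x - m with hd_def
  have hEd : ∑ x, μ x * d x = 0 := by
    simp_rw [hd_def, mul_sub]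
    rw [Finset.sum_sub_distrib, ← hm_def, ← Finset.sum_mul, hsum, one_mul, sub_self]
  set S1 : (Fin N → χ) → ℝ := fun X => (1/(N:ℝ)) * ∑ i, g (X i) with hS1_def
  -- pointwise bound
  have hpt : ∀ X : Fin N → χ,
      |(1 / N : ℝ) * (∑ i, ρ (X i)) - 1|
        ≤ |S1 X - m| + ((1/(N:ℝ)) * ∑ i, (ρ (X i) - g (X i)) + p) := by
    intro X
    have hb0 : 0 ≤ (1/(N:ℝ)) * ∑ i, (ρ (X i) - g (X i)) := by
      refine mul_nonneg (by positivity) (Finset.sum_nonneg fun i _ => ?_)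
      linarith [hgρ (X i)]
    have hsplit : (1/(N:ℝ)) * (∑ i, ρ (X i))
        = S1 X + (1/(N:ℝ)) * ∑ i, (ρ (X i) - g (X i)) := by
      rw [hS1_def]; dsimp only
      rw [Finset.sum_sub_distrib]; ring
    set b := (1/(N:ℝ)) * ∑ i, (ρ (X i) - g (X i)) with hb
    have key : (1 / (N:ℝ)) * (∑ i, ρ (X i)) - 1 = (S1 X - m) + (b - p) := by
      rw [hsplit, ← h1m]; ring
    rw [key]
    calc |(S1 X - m) + (b - p)| ≤ |S1 X - m| + |b - p| := abs_add_le _ _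
      _ ≤ |S1 X - m| + (b + p) := by
          have : |b - p| ≤ |b| + |p| := abs_sub _ _
          rw [abs_of_nonneg hb0, abs_of_nonneg hp0] at this
          linarith
  -- expectation of h-part
  have hT2 : ∑ X : Fin N → χ, P X * ((1/(N:ℝ)) * ∑ i, (ρ (X i) - g (X i))) = p := by
    have hswap : ∀ X : Fin N → χ, P X * ((1/(N:ℝ)) * ∑ i, (ρ (X i) - g (X i)))
        = (1/(N:ℝ)) * ∑ i, P X * (ρ (X i) - g (X i)) := by
      intro X
      rw [mul_left_comm, Finset.mul_sum]
    simp_rw [hswap]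
    rw [← Finset.mul_sum, Finset.sum_comm]
    have hinner : ∀ i : Fin N, (∑ X : Fin N → χ, P X * (ρ (X i) - g (X i))) = p := by
      intro i
      simp only [hP_def]
      rw [exp_single μ (fun x => ρ x - g x) hsum i, hp_def]
      exact Finset.sum_congr rfl fun x _ => hμh x
    rw [Finset.sum_congr rfl fun i _ => hinner i]
    rw [Finset.sum_const, Finset.card_univ, Fintype.card_fin, nsmul_eq_mul]
    field_simp
  -- variance computation
  set V : ℝ := ∑ x, μ x * d x ^ 2 with hV_def
  have hij : ∀ i j : Fin N, (∑ X : Fin N → χ, P X * (d (X i) * d (X j)))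
      = if i = j then V else 0 := by
    intro i j
    by_cases h : i = j
    · subst h
      rw [if_pos rfl]
      simp only [hP_def]
      rw [exp_single μ (fun x => d x * d x) hsum i, hV_def]
      exact Finset.sum_congr rfl fun x _ => by ring
    · rw [if_neg h]
      simp only [hP_def]
      rw [exp_pair μ d d hsum i j h, hEd, mul_zero]
  have hS1m : ∀ X : Fin N → χ, S1 X - m = (1/(N:ℝ)) * ∑ i, d (X i) := by
    intro X
    rw [hS1_def, hd_def]; dsimp only
    rw [Finset.sum_sub_distrib, Finset.sum_const, Finset.card_univ, Fintype.card_fin,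
      nsmul_eq_mul, mul_sub]
    have : (1/(N:ℝ)) * ((N:ℝ) * m) = m := by field_simp
    rw [this]
  have hVar : ∑ X : Fin N → χ, P X * (S1 X - m)^2 = V / N := by
    have hsq : ∀ X : Fin N → χ, P X * (S1 X - m)^2
        = (1/(N:ℝ))^2 * ∑ q : Fin N × Fin N, P X * (d (X q.1) * d (X q.2)) := by
      intro X
      rw [hS1m X, mul_pow]
      have h2 : (∑ i, d (X i))^2 = ∑ q : Fin N × Fin N, d (X q.1) * d (X q.2) := by
        rw [sq, Finset.sum_mul_sum]
        exact (Fintype.sum_prod_type (f := fun q : Fin N × Fin N => d (X q.1) * d (X q.2))).symm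
      rw [h2, ← Finset.mul_sum]
      ring
    simp_rw [hsq]
    rw [← Finset.mul_sum, Finset.sum_comm]
    rw [Finset.sum_congr rfl fun q (_ : q ∈ Finset.univ) => hij q.1 q.2]
    rw [Fintype.sum_prod_type]
    simp_rw [Finset.sum_ite_eq, Finset.mem_univ, if_true]
    rw [Finset.sum_const, Finset.card_univ, Fintype.card_fin, nsmul_eq_mul]
    field_simp
  -- Cauchy-Schwarz
  have hCS : (∑ X : Fin N → χ, P X * |S1 X - m|)^2 ≤ V / N := by
    have h := Finset.sum_mul_sq_le_sq_mul_sq Finset.univ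
      (fun X : Fin N → χ => Real.sqrt (P X))
      (fun X => Real.sqrt (P X) * |S1 X - m|)
    have h1 : ∀ X : Fin N → χ, Real.sqrt (P X) * (Real.sqrt (P X) * |S1 X - m|)
        = P X * |S1 X - m| := by
      intro X; rw [← mul_assoc, Real.mul_self_sqrt (hP0 X)]
    have h2 : ∀ X : Fin N → χ, Real.sqrt (P X) ^ 2 = P X := fun X => Real.sq_sqrt (hP0 X)
    have h3 : ∀ X : Fin N → χ, (Real.sqrt (P X) * |S1 X - m|)^2 = P X * (S1 X - m)^2 := by
      intro X; rw [mul_pow, Real.sq_sqrt (hP0 X), sq_abs]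
    simp_rw [h1, h2, h3] at h
    rw [hE1, one_mul, hVar] at h
    exact h
  -- V ≤ A
  have hVg2 : V = (∑ x, μ x * g x ^ 2) - m ^ 2 := by
    have hx : ∀ x, μ x * d x ^ 2 = μ x * g x ^ 2 - 2*m*(μ x * g x) + m^2 * μ x := by
      intro x; rw [hd_def]; dsimp only; ring
    rw [hV_def]
    simp_rw [hx]
    rw [Finset.sum_add_distrib, Finset.sum_sub_distrib, ← Finset.mul_sum, ← Finset.mul_sum,
      ← hm_def, hsum]
    ring
  have hVA : V ≤ A := by
    have hg2 : (∑ x, μ x * g x ^ 2) ≤ A * m := by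
      rw [hm_def, Finset.mul_sum]
      refine Finset.sum_le_sum fun x _ => ?_
      have h1 := hg0 x; have h2 := hgA x; have h3 := (hpos x).le
      calc μ x * g x ^2 = (μ x * g x) * g x := by ring
        _ ≤ (μ x * g x) * A := mul_le_mul_of_nonneg_left h2 (mul_nonneg h3 h1)
        _ = A * (μ x * g x) := by ring
    nlinarith [sq_nonneg m, mul_nonneg hApos.le (sub_nonneg.mpr hm1)]
  -- T1 bound
  have hT1 : ∑ X : Fin N → χ, P X * |S1 X - m| ≤ Real.exp (-t/4) := by
    have h0 : 0 ≤ ∑ X : Fin N → χ, P X * |S1 X - m| :=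
      Finset.sum_nonneg fun X _ => mul_nonneg (hP0 X) (abs_nonneg _)
    have hAN : A / N ≤ Real.exp (-(t/2)) := by
      rw [div_le_iff₀ hNpos]
      calc A = Real.exp (-(t/2)) * Real.exp (L + t) := by
            rw [← Real.exp_add, hA_def]; ring_nf
        _ ≤ Real.exp (-(t/2)) * N := mul_le_mul_of_nonneg_left hNr (Real.exp_pos _).le
    have hVN : V / (N:ℝ) ≤ A / N := by gcongr
    have hsq2 : (∑ X : Fin N → χ, P X * |S1 X - m|)^2 ≤ Real.exp (-(t/2)) :=
      le_trans hCS (le_trans hVN hAN)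
    have hexp : Real.exp (-(t/2)) = (Real.exp (-t/4))^2 := by
      rw [sq, ← Real.exp_add]; ring_nf
    nlinarith [Real.exp_pos (-t/4), hsq2, h0]
  -- assemble
  calc ∑ X : Fin N → χ, P X * |(1 / N : ℝ) * (∑ i, ρ (X i)) - 1|
      ≤ ∑ X : Fin N → χ, P X * (|S1 X - m| + ((1/(N:ℝ)) * ∑ i, (ρ (X i) - g (X i)) + p)) :=
        Finset.sum_le_sum fun X _ => mul_le_mul_of_nonneg_left (hpt X) (hP0 X)
    _ = (∑ X : Fin N → χ, P X * |S1 X - m|)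
        + ((∑ X : Fin N → χ, P X * ((1/(N:ℝ)) * ∑ i, (ρ (X i) - g (X i))))
          + (∑ X : Fin N → χ, P X * p)) := by
        simp_rw [mul_add]
        rw [Finset.sum_add_distrib, Finset.sum_add_distrib]
    _ ≤ Real.exp (-t/4) + (p + p) := by
        have hPp : ∑ X : Fin N → χ, P X * p = p := by
          rw [← Finset.sum_mul, hE1, one_mul]
        rw [hT2, hPp]
        exact add_le_add_left hT1 _
    _ ≤ Real.exp (-t/4) + 2*ε := by linarith [hpε]
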